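/- If p₁,…,p_K are random variables each marginally uniform on [0,1] (with arbitrary dependence) and K is odd, then for the median p_med we have P(p_med ≤ α) ≤ 2α for all α ∈ [0,1]. -/

import Mathlib

open MeasureTheory ProbabilityTheory

/-- The sample median of `K` real numbers: the middle entry (index `K / 2`,
zero-based) of the sorted list of values. -/
noncomputable def sampleMedian {K : ℕ} (v : Fin K → ℝ) : ℝ :=
  ((List.ofFn v).mergeSort (· ≤ ·)).getD (K / 2) 0

/-- If the sample median is at most `α`, then at least `K / 2 + 1` of the
values are at most `α`. -/
lemma median_count_ge {K : ℕ} (hK : Odd K) (v : Fin K → ℝ) {α : ℝ}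
    (h : sampleMedian v ≤ α) :
    ((K / 2 + 1 : ℕ) : ENNReal) ≤ ∑ k : Fin K, if v k ≤ α then (1 : ENNReal) else 0 := by
  classical
  set l := (List.ofFn v).mergeSort (· ≤ ·) with hl
  have hperm : l.Perm (List.ofFn v) := List.mergeSort_perm _ _
  have hsort : l.Pairwise (· ≤ ·) := List.pairwise_mergeSort' _ _
  have hlen : l.length = K := by rw [hperm.length_eq, List.length_ofFn]
  have hKpos : 0 < K := hK.pos
  have hmid : K / 2 < l.length := by
    rw [hlen]; exact Nat.div_lt_self hKpos one_lt_two
  have hmed : l[K / 2] ≤ α := by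
    have h0 := List.getD_eq_getElem l 0 hmid
    rw [sampleMedian, ← hl, h0] at h
    exact h
  set g : ℝ → ENNReal := fun x => if x ≤ α then 1 else 0 with hg
  have hsum : (∑ k : Fin K, if v k ≤ α then (1 : ENNReal) else 0) = (l.map g).sum := by
    rw [(hperm.map g).sum_eq, List.map_ofFn, List.sum_ofFn]
    rfl
  rw [hsum]
  set m := K / 2 + 1 with hm
  have hmle : m ≤ K := by omega
  have htake : ∀ x ∈ l.take m, g x = 1 := by
    intro x hx
    rw [List.mem_take_iff_getElem] at hx
    obtain ⟨i, hi, rfl⟩ := hx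
    have hi' : i < m := lt_of_lt_of_le hi (min_le_left _ _)
    have hile : i ≤ K / 2 := by omega
    have hle : l[i] ≤ l[K/2] := by
      rcases lt_or_eq_of_le hile with h' | h'
      · exact List.Pairwise.rel_get_of_lt hsort (by simpa using h')
      · simp [h']
    simp [hg, le_trans hle hmed]
  have hsplit : (l.map g).sum = ((l.take m).map g).sum + ((l.drop m).map g).sum := by
    conv_lhs => rw [← List.take_append_drop m l]
    rw [List.map_append, List.sum_append]
  rw [hsplit]
  have h1 : ((l.take m).map g).sum = m := by
    have hrep : (l.take m).map g = List.replicate m 1 := by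
      rw [List.eq_replicate_iff]
      constructor
      · rw [List.length_map, List.length_take, hlen]; omega
      · intro b hb
        rw [List.mem_map] at hb
        obtain ⟨x, hx, rfl⟩ := hb
        exact htake x hx
    rw [hrep, List.sum_replicate]; simp
  rw [h1]
  exact le_self_add

/-- Validity of median aggregation with a factor-2 correction: if
`p₁, …, p_K` are each marginally uniform on `[0,1]` (arbitrary dependence)
and `K` is odd, then `P(p_med ≤ α) ≤ 2α` for all `α ∈ [0,1]`. -/
theorem median_aggregation_valid
    {Ω : Type*} {mΩ : MeasurableSpace Ω} (μ : Measure Ω) [IsProbabilityMeasure μ]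
    (K : ℕ) (hK : Odd K) (p : Fin K → Ω → ℝ)
    (hRange : ∀ k ω, p k ω ∈ Set.Icc (0 : ℝ) 1)
    (hUnif : ∀ k, μ.map (p k) = volume.restrict (Set.Icc (0 : ℝ) 1)) :
    ∀ α ∈ Set.Icc (0 : ℝ) 1,
      μ {ω | sampleMedian (fun k => p k ω) ≤ α} ≤ ENNReal.ofReal (2 * α) := by
  intro α hα
  obtain ⟨hα0, hα1⟩ := hα
  classical
  have haem : ∀ k, AEMeasurable (p k) μ := by
    intro k
    by_contra hc
    have h := hUnif k
    rw [Measure.map_of_not_aemeasurable hc] at h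
    have := congrArg (fun m : Measure ℝ => m Set.univ) h
    simp [Real.volume_Icc] at this
  set g : ℝ → ENNReal := fun x => if x ≤ α then 1 else 0 with hgdef
  have hgind : g = (Set.Iic α).indicator (fun _ => 1) := by
    ext x; simp [hgdef, Set.indicator_apply]
  have hgm : Measurable g := by
    rw [hgind]; exact measurable_const.indicator measurableSet_Iic
  set f : Ω → ENNReal := fun ω => ∑ k : Fin K, g (p k ω) with hfdef
  have hfm : AEMeasurable f μ :=
    Finset.aemeasurable_fun_sum _ (fun k _ => hgm.comp_aemeasurable (haem k))
  set m := K / 2 + 1 with hm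
  have hsub : {ω | sampleMedian (fun k => p k ω) ≤ α} ⊆ {ω | (m : ENNReal) ≤ f ω} := by
    intro ω hω
    exact median_count_ge hK (fun k => p k ω) hω
  have hmarkov := mul_meas_ge_le_lintegral₀ hfm (m : ENNReal)
  have hone : ∀ k : Fin K, ∫⁻ ω, g (p k ω) ∂μ = ENNReal.ofReal α := by
    intro k
    rw [← lintegral_map' hgm.aemeasurable (haem k)]
    · rw [hUnif k, hgind]
      rw [show lintegral (volume.restrict (Set.Icc (0:ℝ) 1)) ((Set.Iic α).indicator fun _ => (1:ENNReal))
          = ∫⁻ x, (Set.Iic α).indicator (fun _ => (1:ENNReal)) x ∂(volume.restrict (Set.Icc (0:ℝ) 1)) from rfl,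
        lintegral_indicator measurableSet_Iic _]
      simp only [lintegral_const, Measure.restrict_restrict measurableSet_Iic]
      have hIcc : Set.Iic α ∩ Set.Icc (0:ℝ) 1 = Set.Icc 0 α := by
        ext x
        simp only [Set.mem_inter_iff, Set.mem_Iic, Set.mem_Icc]
        constructor
        · rintro ⟨h, h', _⟩; exact ⟨h', h⟩
        · rintro ⟨h, h'⟩; exact ⟨h', h, le_trans h' hα1⟩
      rw [hIcc]
      simp [Real.volume_Icc, hα0]
  have hint : ∫⁻ ω, f ω ∂μ = K * ENNReal.ofReal α := by
    simp only [hfdef]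
    rw [lintegral_finset_sum' (f := fun k ω => g (p k ω)) _
      (fun k _ => hgm.comp_aemeasurable (haem k))]
    simp [hone]
  have hK2 : (K : ENNReal) ≤ 2 * m := by
    have h2 : K ≤ 2 * m := by omega
    calc (K : ENNReal) ≤ ((2 * m : ℕ) : ENNReal) := by exact_mod_cast h2
      _ = 2 * m := by push_cast; ring
  have chain : (m : ENNReal) * μ {ω | sampleMedian (fun k => p k ω) ≤ α}
      ≤ (m : ENNReal) * (2 * ENNReal.ofReal α) := by
    calc (m : ENNReal) * μ {ω | sampleMedian (fun k => p k ω) ≤ α}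
        ≤ (m : ENNReal) * μ {ω | (m : ENNReal) ≤ f ω} :=
          mul_le_mul_right (measure_mono hsub) _
      _ ≤ ∫⁻ ω, f ω ∂μ := hmarkov
      _ = K * ENNReal.ofReal α := hint
      _ ≤ (2 * m) * ENNReal.ofReal α := mul_le_mul_left hK2 _
      _ = (m : ENNReal) * (2 * ENNReal.ofReal α) := by ring
  have hmne : (m : ENNReal) ≠ 0 := by simp [hm]
  have hmtop : (m : ENNReal) ≠ ⊤ := ENNReal.natCast_ne_top m
  have hfin := (ENNReal.mul_le_mul_iff_right hmne hmtop).mp chain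
  calc μ {ω | sampleMedian (fun k => p k ω) ≤ α} ≤ 2 * ENNReal.ofReal α := hfin
    _ = ENNReal.ofReal (2 * α) := by
      rw [ENNReal.ofReal_mul (by norm_num : (0:ℝ) ≤ 2)]
      norm_num
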